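/- arXiv:0806.3833 — 2 statements merged into one kernel-verified Lean document; each statement's English description precedes it below -/
import Mathlib

section
/- For θ ∈ (0,π) and 0 < y < π − θ, the inverse function of f_θ is given by f_θ^{-1}(y) = log(sin y / sin(y + θ)). -/
open Real


private lemma key_aux (θ φ x : ℝ) :
    Complex.exp (2 * Complex.I * (φ:ℂ)) * (1 - Complex.exp ((x:ℂ) + Complex.I * (θ:ℂ))) =
      1 - Complex.exp ((x:ℂ) - Complex.I * (θ:ℂ)) ↔
    Real.exp x * Real.sin (φ + θ) = Real.sin φ := by
  have ha := Complex.exp_ne_zero ((φ:ℂ) * Complex.I)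
  have hb := Complex.exp_ne_zero ((θ:ℂ) * Complex.I)
  have hI : (Complex.I : ℂ) ≠ 0 := Complex.I_ne_zero
  rw [← Complex.ofReal_inj]
  push_cast
  rw [Complex.sin, Complex.sin]
  have e1 : (2 * Complex.I * (φ:ℂ)) = (φ:ℂ)*Complex.I + (φ:ℂ)*Complex.I := by ring
  have e2 : ((x:ℂ) + Complex.I * (θ:ℂ)) = (x:ℂ) + (θ:ℂ)*Complex.I := by ring
  have e3 : ((x:ℂ) - Complex.I * (θ:ℂ)) = (x:ℂ) + -((θ:ℂ)*Complex.I) := by ring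
  have e4 : ((-((φ:ℂ)+(θ:ℂ))) * Complex.I) = -((φ:ℂ)*Complex.I) + -((θ:ℂ)*Complex.I) := by ring
  have e6 : ((-(φ:ℂ)) * Complex.I) = -((φ:ℂ)*Complex.I) := by ring
  have e5 : ((((φ:ℂ)+(θ:ℂ))) * Complex.I) = (φ:ℂ)*Complex.I + (θ:ℂ)*Complex.I := by ring
  rw [e1, e2, e3, e4, e5, e6, Complex.exp_add, Complex.exp_add, Complex.exp_add, Complex.exp_add,
    Complex.exp_add, Complex.exp_neg, Complex.exp_neg]
  rw [show Complex.exp ((x:ℂ)) = ((Real.exp x : ℂ)) by rw [Complex.ofReal_exp]]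
  set A := Complex.exp ((φ:ℂ)*Complex.I)
  set B := Complex.exp ((θ:ℂ)*Complex.I)
  set T := ((Real.exp x : ℂ))
  have hT : T ≠ 0 := Complex.ofReal_ne_zero.mpr (Real.exp_pos x).ne'
  have h2 : (2 : ℂ) * Complex.I * A ≠ 0 := mul_ne_zero (mul_ne_zero two_ne_zero hI) ha
  constructor <;> intro h
  · field_simp at h ⊢
    linear_combination h
  · field_simp at h ⊢
    refine mul_left_cancel₀ h2 ?_
    linear_combination (2 * Complex.I * A) * h

/-- for any x, the defining equation in product form -/
private lemma prod_form (θ : ℝ) (f : ℝ → ℝ)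
    (hf : ∀ x : ℝ, 0 < f x ∧ f x < π ∧
      Complex.exp (2 * Complex.I * (f x : ℂ)) =
        (1 - Complex.exp ((x : ℂ) - Complex.I * (θ : ℂ))) /
        (1 - Complex.exp ((x : ℂ) + Complex.I * (θ : ℂ)))) (x : ℝ) :
    Complex.exp (2 * Complex.I * (f x : ℂ)) * (1 - Complex.exp ((x:ℂ) + Complex.I * (θ:ℂ))) =
      1 - Complex.exp ((x:ℂ) - Complex.I * (θ:ℂ)) := by
  obtain ⟨-, -, heq⟩ := hf x
  have hD : (1 : ℂ) - Complex.exp ((x:ℂ) + Complex.I * (θ:ℂ)) ≠ 0 := by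
    intro h0
    rw [h0, div_zero] at heq
    exact Complex.exp_ne_zero _ heq
  rw [heq]
  field_simp

/-- For `θ ∈ (0,π)` and `0 < y < π − θ`, the inverse function of
`f_θ` is given by `f_θ⁻¹(y) = log(sin y / sin(y + θ))`. This is expressed by the
two identities `f(log(sin y / sin(y+θ))) = y` and
`log(sin (f x) / sin (f x + θ)) = x`. -/
theorem stmt2 (θ : ℝ) (hθ₀ : 0 < θ) (hθπ : θ < π) (f : ℝ → ℝ)
    (hf : ∀ x : ℝ, 0 < f x ∧ f x < π ∧
      Complex.exp (2 * Complex.I * (f x : ℂ)) =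
        (1 - Complex.exp ((x : ℂ) - Complex.I * (θ : ℂ))) /
        (1 - Complex.exp ((x : ℂ) + Complex.I * (θ : ℂ)))) :
    (∀ y : ℝ, 0 < y → y < π - θ →
      f (Real.log (Real.sin y / Real.sin (y + θ))) = y) ∧
    (∀ x : ℝ, Real.log (Real.sin (f x) / Real.sin (f x + θ)) = x) := by
  have key : ∀ x : ℝ, Real.exp x * Real.sin (f x + θ) = Real.sin (f x) := fun x =>
    (key_aux θ (f x) x).mp (prod_form θ f hf x)
  have part2 : ∀ x : ℝ, Real.log (Real.sin (f x) / Real.sin (f x + θ)) = x := by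
    intro x
    obtain ⟨h0, h1, -⟩ := hf x
    have hs : 0 < Real.sin (f x) := Real.sin_pos_of_pos_of_lt_pi h0 h1
    have hs2 : 0 < Real.sin (f x + θ) := by
      have := key x
      nlinarith [Real.exp_pos x, Real.sin_le_one (f x + θ)]
    have : Real.sin (f x) / Real.sin (f x + θ) = Real.exp x := by
      field_simp [(key x).symm]
      linear_combination -(key x)
    rw [this, Real.log_exp]
  refine ⟨?_, part2⟩
  intro y hy0 hy1
  have hsy : 0 < Real.sin y := Real.sin_pos_of_pos_of_lt_pi hy0 (by linarith)
  have hsy2 : 0 < Real.sin (y + θ) := Real.sin_pos_of_pos_of_lt_pi (by linarith) (by linarith)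
  set x := Real.log (Real.sin y / Real.sin (y + θ)) with hx
  have hex : Real.exp x = Real.sin y / Real.sin (y + θ) :=
    Real.exp_log (div_pos hsy hsy2)
  have hkey_y : Real.exp x * Real.sin (y + θ) = Real.sin y := by
    rw [hex]; field_simp
  -- so exp(2I y) satisfies same equation as exp(2I f x)
  have hEy := (key_aux θ y x).mpr hkey_y
  have hEf := prod_form θ f hf x
  have hD : (1 : ℂ) - Complex.exp ((x:ℂ) + Complex.I * (θ:ℂ)) ≠ 0 := by
    obtain ⟨-, -, heq⟩ := hf x
    intro h0
    rw [h0, div_zero] at heq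
    exact Complex.exp_ne_zero _ heq
  have hexp_eq : Complex.exp (2 * Complex.I * (f x : ℂ)) = Complex.exp (2 * Complex.I * (y : ℂ)) := by
    have := hEf.trans hEy.symm
    exact mul_right_cancel₀ hD this
  obtain ⟨n, hn⟩ := Complex.exp_eq_exp_iff_exists_int.mp hexp_eq
  have h2I : (2 : ℂ) * Complex.I ≠ 0 := mul_ne_zero two_ne_zero Complex.I_ne_zero
  have hfx : ((f x : ℂ)) = (y : ℂ) + (n : ℂ) * (π : ℂ) := by
    apply mul_left_cancel₀ h2I
    rw [show (2:ℂ) * Complex.I * ((y:ℂ) + (n:ℂ)*(π:ℂ)) = 2*Complex.I*(y:ℂ) + (n:ℂ)*(2*(π:ℂ)*Complex.I) by ring]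
    exact hn
  have hfxr : f x = y + n * π := by
    have := hfx
    push_cast at this
    exact_mod_cast this
  obtain ⟨h0, h1, -⟩ := hf x
  have hn0 : n = 0 := by
    have hyπ : y < π := by linarith
    rcases lt_trichotomy n 0 with h | h | h
    · have : (n : ℝ) ≤ -1 := by exact_mod_cast Int.le_sub_one_of_lt h
      nlinarith [pi_pos]
    · exact h
    · have : (1 : ℝ) ≤ (n : ℝ) := by exact_mod_cast h
      nlinarith [pi_pos]
  rw [hfxr, hn0]
  push_cast
  ring
end

section
/- Dirichlet principle uniqueness: Let G be the graph associated to a finite simply connected b-quad-graph with admissible labelling α, and suppose r₁, r₂ : V(G) → (0,∞) both satisfy the circle pattern equation Σ_{[z,z₀] ∈ E(G)} f_{α([z,z₀])}(log r_i(z) − log r_i(z₀)) = π at every interior vertex z₀ and agree on all boundary vertices. Then r₁ = r₂ on all of V(G). -/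
open Real

set_option linter.unusedVariables false

lemma cot_key (θ x f : ℝ) (hθ1 : 0 < θ) (hθ2 : θ < π)
    (h1 : 0 < f) (h2 : f < π)
    (h3 : Complex.exp (2 * Complex.I * (f : ℂ)) =
        (1 - Complex.exp ((x : ℂ) - Complex.I * (θ : ℂ))) /
        (1 - Complex.exp ((x : ℂ) + Complex.I * (θ : ℂ)))) :
    Real.tan (π/2 - f) = (Real.exp (-x) - Real.cos θ)/Real.sin θ := by
  have hsθ : 0 < Real.sin θ := Real.sin_pos_of_pos_of_lt_pi hθ1 hθ2
  have hsf : 0 < Real.sin f := Real.sin_pos_of_pos_of_lt_pi h1 h2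
  have hden : (1 : ℂ) - Complex.exp ((x : ℂ) + Complex.I * (θ : ℂ)) ≠ 0 := by
    intro h
    have h' : Complex.exp ((x : ℂ) + Complex.I * (θ : ℂ)) = 1 := by
      linear_combination -h
    have him := congrArg Complex.im h'
    rw [Complex.exp_im] at him
    simp at him
    nlinarith [Real.exp_pos x]
  rw [eq_div_iff hden] at h3
  have hre := congrArg Complex.re h3
  simp [Complex.exp_re, Complex.exp_im, Complex.mul_re, Complex.mul_im,
    Complex.sub_re, Complex.sub_im, Complex.add_re, Complex.add_im,
    Complex.I_re, Complex.I_im, Complex.ofReal_re, Complex.ofReal_im] at hre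
  rw [Real.sin_two_mul, Real.cos_two_mul'] at hre
  have key0 : Real.sin f * (Real.sin f * (1 - rexp x * Real.cos θ)
      - Real.cos f * (rexp x * Real.sin θ)) = 0 := by
    have hp := Real.sin_sq_add_cos_sq f
    linear_combination (-(1:ℝ)/2) * hre + ((1 - rexp x * Real.cos θ)/2) * hp
  have key : Real.sin f * (1 - rexp x * Real.cos θ)
      - Real.cos f * (rexp x * Real.sin θ) = 0 := by
    rcases mul_eq_zero.mp key0 with h | h
    · exact absurd h hsf.ne'
    · exact h
  rw [Real.tan_eq_sin_div_cos, Real.sin_pi_div_two_sub, Real.cos_pi_div_two_sub,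
    Real.exp_neg]
  rw [div_eq_div_iff hsf.ne' hsθ.ne']
  field_simp [Real.exp_ne_zero]
  linear_combination (-1 : ℝ) * key

lemma F_strictMono (θ : ℝ) (hθ1 : 0 < θ) (hθ2 : θ < π) (Fθ : ℝ → ℝ)
    (hF : ∀ x : ℝ, 0 < Fθ x ∧ Fθ x < π ∧
      Complex.exp (2 * Complex.I * (Fθ x : ℂ)) =
        (1 - Complex.exp ((x : ℂ) - Complex.I * (θ : ℂ))) /
        (1 - Complex.exp ((x : ℂ) + Complex.I * (θ : ℂ)))) :
    StrictMono Fθ := by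
  have hsθ : 0 < Real.sin θ := Real.sin_pos_of_pos_of_lt_pi hθ1 hθ2
  have mem : ∀ x : ℝ, π/2 - Fθ x ∈ Set.Ioo (-(π/2)) (π/2) := by
    intro x
    obtain ⟨a, b, -⟩ := hF x
    constructor <;> [linarith; linarith]
  intro x₁ x₂ hx
  have k₁ := cot_key θ x₁ (Fθ x₁) hθ1 hθ2 (hF x₁).1 (hF x₁).2.1 (hF x₁).2.2
  have k₂ := cot_key θ x₂ (Fθ x₂) hθ1 hθ2 (hF x₂).1 (hF x₂).2.1 (hF x₂).2.2
  have htan : Real.tan (π/2 - Fθ x₂) < Real.tan (π/2 - Fθ x₁) := by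
    rw [k₁, k₂]
    have : Real.exp (-x₂) < Real.exp (-x₁) := Real.exp_lt_exp.mpr (by linarith)
    apply div_lt_div_of_pos_right ?_ hsθ  -- maybe wrong name
    linarith
  have := (Real.strictMonoOn_tan.lt_iff_lt (mem x₂) (mem x₁)).mp htan
  linarith


section
variable {V : Type*} [Fintype V] [DecidableEq V]

lemma main_half
    (G : SimpleGraph V) [DecidableRel G.Adj] (hG : G.Connected)
    (B : Set V) (hB : B.Nonempty)
    (α : V → V → ℝ)
    (hα : ∀ x y, G.Adj x y → 0 < α x y ∧ α x y < π)
    (F : ℝ → ℝ → ℝ)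
    (hFmono : ∀ θ, 0 < θ → θ < π → StrictMono (F θ))
    (r₁ r₂ : V → ℝ) (hr₁ : ∀ z, 0 < r₁ z) (hr₂ : ∀ z, 0 < r₂ z)
    (heq₁ : ∀ z, z ∉ B →
      (∑ y : V, (if G.Adj z y then
        F (α z y) (Real.log (r₁ y) - Real.log (r₁ z)) else 0)) = π)
    (heq₂ : ∀ z, z ∉ B →
      (∑ y : V, (if G.Adj z y then
        F (α z y) (Real.log (r₂ y) - Real.log (r₂ z)) else 0)) = π)
    (hbd : ∀ z ∈ B, r₁ z = r₂ z) :
    ∀ z, Real.log (r₁ z) ≤ Real.log (r₂ z) := by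
  set u : V → ℝ := fun z => Real.log (r₁ z) - Real.log (r₂ z) with hu
  have : Nonempty V := hG.nonempty
  obtain ⟨z₀, -, hz₀⟩ := Finset.exists_max_image Finset.univ u ⟨Classical.arbitrary V, Finset.mem_univ _⟩
  set M := u z₀ with hM
  have hmax : ∀ z, u z ≤ M := fun z => hz₀ z (Finset.mem_univ z)
  -- propagation step
  have step : ∀ z, u z = M → z ∉ B → ∀ y, G.Adj z y → u y = M := by
    intro z hzM hzB
    by_contra hcon
    push_neg at hcon
    obtain ⟨y₀, hy₀adj, hy₀⟩ := hcon
    have hy₀lt : u y₀ < M := lt_of_le_of_ne (hmax y₀) hy₀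
    have hlt : (∑ y : V, (if G.Adj z y then
        F (α z y) (Real.log (r₁ y) - Real.log (r₁ z)) else 0)) <
        (∑ y : V, (if G.Adj z y then
        F (α z y) (Real.log (r₂ y) - Real.log (r₂ z)) else 0)) := by
      apply Finset.sum_lt_sum
      · intro y _
        by_cases hadj : G.Adj z y
        · simp only [hadj, if_true]
          have hay := hα z y hadj
          have harg : Real.log (r₁ y) - Real.log (r₁ z) ≤
              Real.log (r₂ y) - Real.log (r₂ z) := by
            have h1 : u y ≤ u z := by rw [hzM]; exact hmax y
            simp only [hu] at h1; linarith
          exact ((hFmono _ hay.1 hay.2).monotone harg)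
        · simp [hadj]
      · refine ⟨y₀, Finset.mem_univ _, ?_⟩
        simp only [hy₀adj, if_true]
        have hay := hα z y₀ hy₀adj
        apply hFmono _ hay.1 hay.2
        have h1 : u y₀ < u z := by rw [hzM]; exact hy₀lt
        simp only [hu] at h1; linarith
    rw [heq₁ z hzB, heq₂ z hzB] at hlt
    exact lt_irrefl _ hlt
  -- find a boundary vertex attaining the max
  obtain ⟨b, hbB⟩ := hB
  have hMle : M ≤ 0 := by
    have hreach : G.Reachable z₀ b := hG.preconnected z₀ b
    obtain ⟨w⟩ := hreach
    have walkprop : ∀ (z z' : V) (w : G.Walk z z'), u z = M → z' ∈ B →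
        ∃ c ∈ B, u c = M := by
      intro z z' w
      induction w with
      | nil => intro h hB'; exact ⟨_, hB', h⟩
      | @cons a a' a'' h w ih =>
        intro hz hB'
        by_cases hzB : a ∈ B
        · exact ⟨a, hzB, hz⟩
        · exact ih (step _ hz hzB _ h) hB'
    obtain ⟨c, hcB, hcM⟩ := walkprop z₀ b w rfl hbB
    rw [← hcM, hu]
    simp only
    rw [hbd c hcB]
    simp
  intro z
  have := hmax z
  simp only [hu] at this
  linarith
end


/-- Dirichlet principle, uniqueness. Let `G` be a finite
connected graph with nonempty boundary `B` and edge labelling `α` with values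
in `(0,π)` on edges, and let `F θ` denote the function `f_θ` (characterized by
`0 < f_θ < π` and `exp(2 i f_θ(x)) = (1 − e^{x−iθ})/(1 − e^{x+iθ})`). If two
positive radius functions `r₁, r₂` satisfy the circle pattern equation
`Σ_{y ∼ z} f_{α(z,y)}(log r_i(y) − log r_i(z)) = π` at every interior vertex
`z` and agree on the boundary, then `r₁ = r₂` everywhere. -/
theorem stmt19 {V : Type*} [Fintype V] [DecidableEq V]
    (G : SimpleGraph V) [DecidableRel G.Adj] (hG : G.Connected)
    (B : Set V) (hB : B.Nonempty)
    (α : V → V → ℝ) (hαsymm : ∀ x y, α x y = α y x)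
    (hα : ∀ x y, G.Adj x y → 0 < α x y ∧ α x y < π)
    (F : ℝ → ℝ → ℝ)
    (hF : ∀ θ, 0 < θ → θ < π → ∀ x : ℝ,
      0 < F θ x ∧ F θ x < π ∧
      Complex.exp (2 * Complex.I * (F θ x : ℂ)) =
        (1 - Complex.exp ((x : ℂ) - Complex.I * (θ : ℂ))) /
        (1 - Complex.exp ((x : ℂ) + Complex.I * (θ : ℂ))))
    (r₁ r₂ : V → ℝ) (hr₁ : ∀ z, 0 < r₁ z) (hr₂ : ∀ z, 0 < r₂ z)
    (heq₁ : ∀ z, z ∉ B →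
      (∑ y : V, (if G.Adj z y then
        F (α z y) (Real.log (r₁ y) - Real.log (r₁ z)) else 0)) = π)
    (heq₂ : ∀ z, z ∉ B →
      (∑ y : V, (if G.Adj z y then
        F (α z y) (Real.log (r₂ y) - Real.log (r₂ z)) else 0)) = π)
    (hbd : ∀ z ∈ B, r₁ z = r₂ z) :
    r₁ = r₂ := by
  have Fmono : ∀ θ, 0 < θ → θ < π → StrictMono (F θ) := fun θ h1 h2 =>
    F_strictMono θ h1 h2 (F θ) (hF θ h1 h2)
  have h1 := main_half G hG B hB α hα F Fmono r₁ r₂ hr₁ hr₂ heq₁ heq₂ hbd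
  have h2 := main_half G hG B hB α hα F Fmono r₂ r₁ hr₂ hr₁ heq₂ heq₁
    (fun z hz => (hbd z hz).symm)
  funext z
  have hlog : Real.log (r₁ z) = Real.log (r₂ z) := le_antisymm (h1 z) (h2 z)
  have := congrArg Real.exp hlog
  rwa [Real.exp_log (hr₁ z), Real.exp_log (hr₂ z)] at this
end
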